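/- Let H be an additive subgroup of ℝⁿ and let v₁, …, v_r ∈ ℝⁿ be linearly independent vectors such that span_ℝ{v₁, …, v_r} ∩ span_ℝ(H) = {0}. Set H' = H + ℤv₁ + ⋯ + ℤv_r. Then p(cl(H')) = p(cl(H)), where cl denotes topological closure and p(G) denotes the maximal dimension of an ℝ-linear subspace of ℝⁿ contained in G. -/

import Mathlib

/-- `pdim G` is the maximal dimension of an `ℝ`-linear subspace of `ℝⁿ`
contained in the set `G`. -/
noncomputable def pdim {n : ℕ} (G : Set (Fin n → ℝ)) : ℕ :=
  sSup {d : ℕ | ∃ V : Submodule ℝ (Fin n → ℝ), (V : Set (Fin n → ℝ)) ⊆ G ∧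
    Module.finrank ℝ V = d}

/-- Lemma 3.2: adding `ℤ`-generators `v₁, …, v_r` that are linearly independent
and transverse to the span of `H` does not change the maximal dimension of a
subspace contained in the closure. -/
theorem pdim_closure_add_transverse_zmultiples (n r : ℕ) (H : AddSubgroup (Fin n → ℝ))
    (v : Fin r → (Fin n → ℝ)) (hv : LinearIndependent ℝ v)
    (htrans : Submodule.span ℝ (Set.range v) ⊓
      Submodule.span ℝ (H : Set (Fin n → ℝ)) = ⊥) :
    pdim (closure ((H ⊔ ⨆ i, AddSubgroup.zmultiples (v i) :
        AddSubgroup (Fin n → ℝ)) : Set (Fin n → ℝ))) =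
      pdim (closure (H : Set (Fin n → ℝ))) := by
  set L : AddSubgroup (Fin n → ℝ) := ⨆ i, AddSubgroup.zmultiples (v i) with hLdef
  set S : Submodule ℝ (Fin n → ℝ) := Submodule.span ℝ (Set.range v) with hSdef
  set T : Submodule ℝ (Fin n → ℝ) := Submodule.span ℝ (H : Set (Fin n → ℝ)) with hTdef
  -- a discrete lattice Λ containing all the `v i`
  have hvs : LinearIndepOn ℝ id (Set.range v) :=
    hv.linearIndepOn_id
  let b : Module.Basis _ ℝ (Fin n → ℝ) := Module.Basis.extend hvs
  haveI : Fintype (hvs.extend (Set.subset_univ (Set.range v))) :=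
    FiniteDimensional.fintypeBasisIndex b
  let Λ : Submodule ℤ (Fin n → ℝ) := Submodule.span ℤ (Set.range b)
  have hvΛ : ∀ i, v i ∈ Λ := by
    intro i
    apply Submodule.subset_span
    have hmem : v i ∈ hvs.extend (Set.subset_univ (Set.range v)) :=
      hvs.subset_extend _ ⟨i, rfl⟩
    exact ⟨⟨v i, hmem⟩, Module.Basis.extend_apply_self hvs _⟩
  have hΛclosed : IsClosed (Λ : Set (Fin n → ℝ)) := by
    have : IsClosed (Λ.toAddSubgroup : Set (Fin n → ℝ)) :=
      AddSubgroup.isClosed_of_discrete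
    exact this
  -- discreteness of Λ : convergent sequences in Λ are eventually constant
  have hdisc : ∀ f : ℕ → (Fin n → ℝ), (∀ k, f k ∈ Λ) →
      Filter.Tendsto f Filter.atTop (nhds 0) → ∀ᶠ k in Filter.atTop, f k = 0 := by
    intro f hf htend
    have h0 : (0 : Fin n → ℝ) ∈ Λ := zero_mem _
    have h1 : Filter.Tendsto (fun k => (⟨f k, hf k⟩ : Λ)) Filter.atTop (nhds ⟨0, h0⟩) := by
      exact tendsto_subtype_rng.mpr htend
    rw [nhds_discrete] at h1
    have h2 := Filter.tendsto_pure.mp h1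
    filter_upwards [h2] with k hk
    exact congrArg Subtype.val hk
  -- the projection onto S killing H
  obtain ⟨W, hW⟩ := Submodule.exists_isCompl (S ⊔ T)
  have hSU : IsCompl S (T ⊔ W) := by
    constructor
    · rw [disjoint_iff]
      ext x
      simp only [Submodule.mem_inf, Submodule.mem_bot]
      constructor
      · rintro ⟨hxS, hxU⟩
        rcases Submodule.mem_sup.mp hxU with ⟨t, ht, w, hw, rfl⟩
        have hw0 : w = 0 := by
          have h1 : t + w - t ∈ W := by simpa using hw
          have h2 : t + w - t ∈ S ⊔ T :=
            sub_mem (Submodule.mem_sup_left hxS) (Submodule.mem_sup_right ht)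
          have := disjoint_iff.mp hW.1
          have h3 : t + w - t ∈ (⊥ : Submodule ℝ (Fin n → ℝ)) := by
            rw [← this]; exact ⟨h2, h1⟩
          simpa using h3
        subst hw0
        have hx : t + 0 ∈ S ⊓ T := ⟨hxS, by simpa using ht⟩
        rw [htrans] at hx
        simpa using hx
      · rintro rfl
        exact ⟨zero_mem _, zero_mem _⟩
    · rw [codisjoint_iff, ← sup_assoc]
      exact codisjoint_iff.mp hW.2
  let P : (Fin n → ℝ) →ₗ[ℝ] (Fin n → ℝ) :=
    S.subtype.comp (S.projectionOnto _ hSU)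
  have hPcont : Continuous P := P.continuous_of_finiteDimensional
  have hPS : ∀ z ∈ S, P z = z := fun z hz => by
    simp only [P, LinearMap.comp_apply]
    rw [Submodule.projectionOnto_apply_of_mem_left hSU hz]
    rfl
  have hPU : ∀ z ∈ T ⊔ W, P z = 0 := fun z hz => by
    simp only [P, LinearMap.comp_apply]
    rw [Submodule.projectionOnto_apply_of_mem_right hSU hz]
    rfl
  have hPH : ∀ z ∈ H, P z = 0 := fun z hz =>
    hPU z (Submodule.mem_sup_left (Submodule.subset_span hz))
  have hPL : ∀ z ∈ L, P z = z := by
    have hle : L ≤ AddMonoidHom.eqLocus P.toAddMonoidHom (AddMonoidHom.id _) := by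
      refine iSup_le fun i => ?_
      rw [AddSubgroup.zmultiples_le]
      show P (v i) = v i
      exact hPS _ (Submodule.subset_span ⟨i, rfl⟩)
    exact fun z hz => hle hz
  have hLΛ : ∀ z ∈ L, z ∈ Λ := by
    have hle : L ≤ Λ.toAddSubgroup := by
      refine iSup_le fun i => ?_
      rw [AddSubgroup.zmultiples_le]
      exact hvΛ i
    exact fun z hz => hle hz
  -- P maps the closure of H ⊔ L into Λ
  have hPclos : ∀ x ∈ closure ((H ⊔ L : AddSubgroup (Fin n → ℝ)) : Set (Fin n → ℝ)),
      P x ∈ Λ := by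
    intro x hx
    have h1 : P x ∈ P '' closure ((H ⊔ L : AddSubgroup (Fin n → ℝ)) : Set (Fin n → ℝ)) :=
      ⟨x, hx, rfl⟩
    have h2 := image_closure_subset_closure_image hPcont h1
    have h3 : P '' ((H ⊔ L : AddSubgroup (Fin n → ℝ)) : Set (Fin n → ℝ)) ⊆
        (Λ : Set (Fin n → ℝ)) := by
      rintro _ ⟨y, hy, rfl⟩
      rcases AddSubgroup.mem_sup.mp hy with ⟨a, ha, c, hc, rfl⟩
      rw [map_add, hPH a ha, hPL c hc, zero_add]
      exact hLΛ c hc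
    exact hΛclosed.closure_subset ((closure_mono h3) h2)
  -- the key step: any subspace inside the closure of H ⊔ L lies in the closure of H
  have key : ∀ V : Submodule ℝ (Fin n → ℝ),
      (V : Set (Fin n → ℝ)) ⊆ closure ((H ⊔ L : AddSubgroup (Fin n → ℝ)) : Set (Fin n → ℝ)) →
      (V : Set (Fin n → ℝ)) ⊆ closure (H : Set (Fin n → ℝ)) := by
    intro V hV x hx
    -- first, P x = 0
    have hPx0 : P x = 0 := by
      have hsmul : ∀ t : ℝ, t • P x ∈ Λ := by
        intro t
        have : t • x ∈ V := V.smul_mem t hx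
        have := hPclos (t • x) (hV this)
        rwa [map_smul] at this
      have htend : Filter.Tendsto (fun k : ℕ => ((1 : ℝ) / (k + 1)) • P x)
          Filter.atTop (nhds 0) := by
        have := tendsto_one_div_add_atTop_nhds_zero_nat (𝕜 := ℝ)
        simpa using this.smul_const (P x)
      have := hdisc _ (fun k => hsmul _) htend
      rcases this.exists with ⟨k, hk⟩
      have hne : ((1 : ℝ) / (k + 1)) ≠ 0 := by positivity
      exact (smul_eq_zero.mp hk).resolve_left hne
    -- get a sequence in H ⊔ L converging to x
    rcases mem_closure_iff_seq_limit.mp (hV hx) with ⟨y, hy, hylim⟩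
    choose h hh l hl hsum using fun k => AddSubgroup.mem_sup.mp (hy k)
    have hPy : ∀ k, P (y k) = l k := by
      intro k
      rw [← hsum k, map_add, hPH _ (hh k), hPL _ (hl k), zero_add]
    have hltend : Filter.Tendsto l Filter.atTop (nhds 0) := by
      have := (hPcont.tendsto x).comp hylim
      rw [hPx0] at this
      exact this.congr hPy
    have hev : ∀ᶠ k in Filter.atTop, l k = 0 :=
      hdisc l (fun k => hLΛ _ (hl k)) hltend
    refine mem_closure_of_tendsto hylim ?_
    filter_upwards [hev] with k hk
    have : y k = h k := by rw [← hsum k, hk, add_zero]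
    rw [this]
    exact hh k
  -- conclude
  have hseteq : {d : ℕ | ∃ V : Submodule ℝ (Fin n → ℝ),
      (V : Set (Fin n → ℝ)) ⊆ closure ((H ⊔ L : AddSubgroup (Fin n → ℝ)) : Set (Fin n → ℝ)) ∧
      Module.finrank ℝ V = d} = {d : ℕ | ∃ V : Submodule ℝ (Fin n → ℝ),
      (V : Set (Fin n → ℝ)) ⊆ closure (H : Set (Fin n → ℝ)) ∧ Module.finrank ℝ V = d} := by
    ext d
    constructor
    · rintro ⟨V, hVsub, rfl⟩
      exact ⟨V, key V hVsub, rfl⟩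
    · rintro ⟨V, hVsub, rfl⟩
      refine ⟨V, hVsub.trans (closure_mono ?_), rfl⟩
      exact SetLike.coe_subset_coe.mpr le_sup_left
  unfold pdim
  rw [hseteq]
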